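/- Let ∇ be a compressed lattice polytope, s ∈ S(∇)_k with k ≥ 1, and v₁, v₂ two vertices of ∇ with (v₁,1) and (v₂,1) each dividing s in the monoid S(∇). Then there is a sequence of vertices w₁ = v₁, w₂, …, w_j = v₂ of ∇ such that each (w_i,1) divides s and consecutive w_i, w_{i+1} are neighbouring vertices of ∇. -/

import Mathlib

open BigOperators Pointwise

/-- Two lattice points of a polytope `P` are neighbouring vertices: the segment
between them is a face (an edge) of `P` with no intermediate lattice point. -/
def Neighbouring {d : ℕ} (P : Set (Fin d → ℝ)) (v w : Fin d → ℤ) : Prop :=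
  v ≠ w ∧
  (fun i => (v i : ℝ)) ∈ Set.extremePoints ℝ P ∧
  (fun i => (w i : ℝ)) ∈ Set.extremePoints ℝ P ∧
  IsExtreme ℝ P (segment ℝ (fun i => (v i : ℝ)) (fun i => (w i : ℝ))) ∧
  ¬ ∃ p : Fin d → ℤ,
    (fun i => (p i : ℝ)) ∈ openSegment ℝ (fun i => (v i : ℝ)) (fun i => (w i : ℝ)) ∧
    p ≠ v ∧ p ≠ w

namespace ChainAux

variable {d : ℕ}

lemma cast_ev (u : Fin d → ℤ) (b : Fin d → ℤ) :
    ((∑ i, u i * b i : ℤ) : ℝ) = ∑ i, (u i : ℝ) * (b i : ℝ) := by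
  push_cast; rfl

lemma ev_comb (b : Fin d → ℤ) (α β : ℝ) (x₁ x₂ : Fin d → ℝ) :
    ∑ i, (α • x₁ + β • x₂) i * (b i : ℝ)
      = α * ∑ i, x₁ i * (b i : ℝ) + β * ∑ i, x₂ i * (b i : ℝ) := by
  rw [Finset.mul_sum, Finset.mul_sum, ← Finset.sum_add_distrib]
  apply Finset.sum_congr rfl
  intro i _
  simp only [Pi.add_apply, Pi.smul_apply, smul_eq_mul]
  ring

lemma force_lower {α β s₁ s₂ b : ℝ} (hα : 0 < α) (hβ : 0 < β) (hαβ : α + β = 1)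
    (hcomb : α * s₁ + β * s₂ = b) (h1 : b ≤ s₁) (h2 : b ≤ s₂) : s₁ = b ∧ s₂ = b := by
  have hA : 0 ≤ α * (s₁ - b) := mul_nonneg hα.le (sub_nonneg.2 h1)
  have hB : 0 ≤ β * (s₂ - b) := mul_nonneg hβ.le (sub_nonneg.2 h2)
  have hsum : α * (s₁ - b) + β * (s₂ - b) = 0 := by linear_combination hcomb - b * hαβ
  have hA0 : α * (s₁ - b) = 0 := by linarith
  have hB0 : β * (s₂ - b) = 0 := by linarith
  have e1 := (mul_eq_zero.mp hA0).resolve_left hα.ne'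
  have e2 := (mul_eq_zero.mp hB0).resolve_left hβ.ne'
  constructor <;> linarith [sub_eq_zero.mp e1, sub_eq_zero.mp e2]

lemma force_upper {α β s₁ s₂ b : ℝ} (hα : 0 < α) (hβ : 0 < β) (hαβ : α + β = 1)
    (hcomb : α * s₁ + β * s₂ = b) (h1 : s₁ ≤ b) (h2 : s₂ ≤ b) : s₁ = b ∧ s₂ = b := by
  have h := force_lower hα hβ hαβ (by linear_combination -hcomb : α * (-s₁) + β * (-s₂) = -b)
    (by linarith) (by linarith)
  constructor <;> linarith [h.1, h.2]

section Main

variable {F : Type} [Fintype F]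
  (a : F → Fin d → ℤ) (c : F → ℤ) (P : Set (Fin d → ℝ))

/-- two possible facet values for an integer point of `P` -/
lemma two_val
    (hmem : ∀ x : Fin d → ℝ, x ∈ P ↔ ∀ f : F, (c f : ℝ) ≤ ∑ i, x i * (a f i : ℝ))
    (hwidth : ∀ f : F, ∀ x ∈ P, ∑ i, x i * (a f i : ℝ) ≤ c f + 1)
    (u : Fin d → ℤ) (hu : (fun i => (u i : ℝ)) ∈ P) (f : F) :
    ∑ i, u i * a f i = c f ∨ ∑ i, u i * a f i = c f + 1 := by
  have h1 : (c f : ℝ) ≤ ∑ i, ((u i : ℝ)) * (a f i : ℝ) := (hmem _).1 hu f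
  have h2 : ∑ i, ((u i : ℝ)) * (a f i : ℝ) ≤ c f + 1 := hwidth f _ hu
  rw [← cast_ev] at h1 h2
  have h1' : c f ≤ ∑ i, u i * a f i := by exact_mod_cast h1
  have h2' : ∑ i, u i * a f i ≤ c f + 1 := by exact_mod_cast h2
  omega

/-- integer points of `P` are determined by their facet values -/
lemma val_inj
    (hcomp : IsCompact P)
    (hmem : ∀ x : Fin d → ℝ, x ∈ P ↔ ∀ f : F, (c f : ℝ) ≤ ∑ i, x i * (a f i : ℝ))
    (u w : Fin d → ℤ) (hu : (fun i => (u i : ℝ)) ∈ P)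
    (hvals : ∀ f, ∑ i, u i * a f i = ∑ i, w i * a f i) : u = w := by
  by_contra hne
  have hex : ∃ i, u i ≠ w i := by
    by_contra h'
    push_neg at h'
    exact hne (funext h')
  obtain ⟨i₀, hi₀⟩ := hex
  set δ : Fin d → ℝ := fun i => (w i : ℝ) - (u i : ℝ) with hδdef
  have hδ : δ i₀ ≠ 0 := by
    simp only [hδdef]
    intro h
    apply hi₀
    have : (w i₀ : ℝ) = (u i₀ : ℝ) := by linarith [sub_eq_zero.mp h]
    exact_mod_cast this.symm
  have hline : ∀ r : ℝ, (fun i => (u i : ℝ) + r * δ i) ∈ P := by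
    intro r
    rw [hmem]
    intro f
    have hval : (∑ i, (w i : ℝ) * (a f i : ℝ)) = ∑ i, (u i : ℝ) * (a f i : ℝ) := by
      rw [← cast_ev, ← cast_ev]
      exact_mod_cast (hvals f).symm
    have expand : ∑ i, ((u i : ℝ) + r * δ i) * (a f i : ℝ)
        = (1 - r) * ∑ i, (u i : ℝ) * (a f i : ℝ) + r * ∑ i, (w i : ℝ) * (a f i : ℝ) := by
      rw [Finset.mul_sum, Finset.mul_sum, ← Finset.sum_add_distrib]
      apply Finset.sum_congr rfl
      intro i _
      simp only [hδdef]
      ring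
    rw [expand, hval]
    have := (hmem _).1 hu f
    linarith
  obtain ⟨C, hC⟩ := Bornology.IsBounded.exists_norm_le hcomp.isBounded
  have hC0 : 0 ≤ C := le_trans (norm_nonneg _) (hC _ hu)
  set r : ℝ := (C + |(u i₀ : ℝ)| + 1) / |δ i₀| with hrdef
  have habs : |δ i₀| > 0 := abs_pos.mpr hδ
  have hr : r * |δ i₀| = C + |(u i₀ : ℝ)| + 1 := by
    rw [hrdef, div_mul_cancel₀ _ habs.ne']
  have hnorm := hC _ (hline r)
  have hcoord : |(u i₀ : ℝ) + r * δ i₀| ≤ C := by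
    have h1 : ‖(fun i => (u i : ℝ) + r * δ i) i₀‖ ≤ ‖(fun i => (u i : ℝ) + r * δ i)‖ :=
      norm_le_pi_norm (fun i => (u i : ℝ) + r * δ i) i₀
    rw [Real.norm_eq_abs] at h1
    exact le_trans h1 hnorm
  have key : |r * δ i₀| ≤ |(u i₀ : ℝ) + r * δ i₀| + |(u i₀ : ℝ)| := by
    have h := abs_add_le ((u i₀ : ℝ) + r * δ i₀) (-(u i₀ : ℝ))
    have he : (u i₀ : ℝ) + r * δ i₀ + -(u i₀ : ℝ) = r * δ i₀ := by ring
    rw [he, abs_neg] at h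
    exact h
  rw [abs_mul] at key
  have hrabs : |r| = r := abs_of_nonneg (by positivity)
  rw [hrabs] at key
  linarith


/-- Main step: connect two divisor vertices by a chain of neighbouring divisor
vertices, phrased via reflexive-transitive closure. -/
lemma chain_rtg
    (V : Finset (Fin d → ℤ))
    (hlat : P = convexHull ℝ ((fun m : Fin d → ℤ => fun i => (m i : ℝ)) ''
      (V : Set (Fin d → ℤ))))
    (hmem : ∀ x : Fin d → ℝ, x ∈ P ↔ ∀ f : F, (c f : ℝ) ≤ ∑ i, x i * (a f i : ℝ))
    (hwidth : ∀ f : F, ∀ x ∈ P, ∑ i, x i * (a f i : ℝ) ≤ c f + 1)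
    (D : (Fin d → ℤ) → Prop)
    (hD : ∀ u x y : Fin d → ℤ, D x → D y →
      (∀ f, ∑ i, u i * a f i = ∑ i, x i * a f i ∨ ∑ i, u i * a f i = ∑ i, y i * a f i) →
      D u)
    (x y : Fin d → ℤ)
    (hx : (fun i => (x i : ℝ)) ∈ Set.extremePoints ℝ P) (hDx : D x)
    (hy : (fun i => (y i : ℝ)) ∈ Set.extremePoints ℝ P) (hDy : D y) :
    Relation.ReflTransGen
      (fun p q => ((fun i => (q i : ℝ)) ∈ Set.extremePoints ℝ P) ∧ D q ∧ Neighbouring P p q)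
      x y := by
  classical
  have hPc : IsCompact P := by
    rw [hlat]
    exact (Set.Finite.image _ V.finite_toSet).isCompact_convexHull ℝ
  have hPconv : Convex ℝ P := by rw [hlat]; exact convex_convexHull ℝ _
  have htv := two_val a c P hmem hwidth
  have hinj := val_inj a c P hPc hmem
  have hPext : Set.extremePoints ℝ P ⊆
      (fun m : Fin d → ℤ => fun i => (m i : ℝ)) '' (V : Set (Fin d → ℤ)) := by
    rw [hlat]; exact extremePoints_convexHull_subset
  -- strong induction on number of disagreeing facets
  suffices H : ∀ n : ℕ, ∀ p q : Fin d → ℤ,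
      (fun i => (p i : ℝ)) ∈ Set.extremePoints ℝ P → D p →
      (fun i => (q i : ℝ)) ∈ Set.extremePoints ℝ P → D q →
      (Finset.univ.filter (fun f => ∑ i, p i * a f i ≠ ∑ i, q i * a f i)).card ≤ n →
      Relation.ReflTransGen
        (fun p q => ((fun i => (q i : ℝ)) ∈ Set.extremePoints ℝ P) ∧ D q ∧ Neighbouring P p q)
        p q by
    exact H _ x y hx hDx hy hDy le_rfl
  intro n
  induction n with
  | zero =>
    intro p q hp hDp hq hDq hcard
    have hfe : ∀ f, ∑ i, p i * a f i = ∑ i, q i * a f i := by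
      intro f
      by_contra hne
      have : f ∈ Finset.univ.filter
          (fun f => ∑ i, p i * a f i ≠ ∑ i, q i * a f i) := by
        simp [hne]
      have := Finset.card_pos.mpr ⟨f, this⟩
      omega
    have : p = q := hinj p q hp.1 hfe
    subst this
    exact Relation.ReflTransGen.refl
  | succ n ih =>
    intro p q hp hDp hq hDq hcard
    by_cases hpq : p = q
    · subst hpq; exact Relation.ReflTransGen.refl
    -- the face of `P` where the common facet values of `p`, `q` are imposed
    set G : Set (Fin d → ℝ) := {z | z ∈ P ∧ ∀ f, ∑ i, p i * a f i = ∑ i, q i * a f i →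
      ∑ i, z i * (a f i : ℝ) = ((∑ i, p i * a f i : ℤ) : ℝ)} with hGdef
    have hGp : (fun i => (p i : ℝ)) ∈ G := by
      refine ⟨hp.1, fun f _ => ?_⟩
      rw [← ChainAux.cast_ev]
    have hGq : (fun i => (q i : ℝ)) ∈ G := by
      refine ⟨hq.1, fun f hf => ?_⟩
      rw [← ChainAux.cast_ev, hf]
    have hGext : IsExtreme ℝ P G := by
      refine ⟨fun z hz => hz.1, ?_⟩
      rintro x₁ hx₁ x₂ hx₂ z hz hzo
      obtain ⟨α, β, hα, hβ, hαβ, hsum⟩ := hzo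
      have key : ∀ f, ∑ i, p i * a f i = ∑ i, q i * a f i →
          (∑ i, x₁ i * (a f i : ℝ) = ((∑ i, p i * a f i : ℤ) : ℝ) ∧
           ∑ i, x₂ i * (a f i : ℝ) = ((∑ i, p i * a f i : ℤ) : ℝ)) := by
        intro f hf
        have hcomb : α * ∑ i, x₁ i * (a f i : ℝ) + β * ∑ i, x₂ i * (a f i : ℝ)
            = ((∑ i, p i * a f i : ℤ) : ℝ) := by
          rw [← ChainAux.ev_comb, hsum]
          exact hz.2 f hf
        have hl1 : (c f : ℝ) ≤ ∑ i, x₁ i * (a f i : ℝ) := (hmem _).1 hx₁ f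
        have hl2 : (c f : ℝ) ≤ ∑ i, x₂ i * (a f i : ℝ) := (hmem _).1 hx₂ f
        have hu1 : ∑ i, x₁ i * (a f i : ℝ) ≤ c f + 1 := hwidth f _ hx₁
        have hu2 : ∑ i, x₂ i * (a f i : ℝ) ≤ c f + 1 := hwidth f _ hx₂
        rcases htv p hp.1 f with hv | hv
        · rw [hv] at hcomb ⊢
          push_cast at hcomb ⊢
          exact ChainAux.force_lower hα hβ hαβ hcomb hl1 hl2
        · rw [hv] at hcomb ⊢
          push_cast at hcomb ⊢
          exact ChainAux.force_upper hα hβ hαβ hcomb hu1 hu2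
      exact ⟨hx₁, fun f hf => (key f hf).1⟩
    have hGclosed : IsClosed G := by
      have hGeq : G = P ∩ ⋂ f : F, {z | ∑ i, p i * a f i = ∑ i, q i * a f i →
          ∑ i, z i * (a f i : ℝ) = ((∑ i, p i * a f i : ℤ) : ℝ)} := by
        ext z
        simp only [hGdef, Set.mem_setOf_eq, Set.mem_inter_iff, Set.mem_iInter]
      rw [hGeq]
      refine IsClosed.inter hPc.isClosed (isClosed_iInter fun f => ?_)
      by_cases hf : ∑ i, p i * a f i = ∑ i, q i * a f i
      · have heq : {z : Fin d → ℝ | ∑ i, p i * a f i = ∑ i, q i * a f i →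
            ∑ i, z i * (a f i : ℝ) = ((∑ i, p i * a f i : ℤ) : ℝ)}
            = {z : Fin d → ℝ | ∑ i, z i * (a f i : ℝ) = ((∑ i, p i * a f i : ℤ) : ℝ)} := by
          ext z
          simp only [Set.mem_setOf_eq]
          exact ⟨fun h => h hf, fun h _ => h⟩
        rw [heq]
        exact isClosed_eq
          (continuous_finset_sum Finset.univ fun i _ => (continuous_apply i).mul continuous_const)
          continuous_const
      · have heq : {z : Fin d → ℝ | ∑ i, p i * a f i = ∑ i, q i * a f i →
            ∑ i, z i * (a f i : ℝ) = ((∑ i, p i * a f i : ℤ) : ℝ)} = Set.univ := by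
          ext z
          simp only [Set.mem_setOf_eq, Set.mem_univ, iff_true]
          exact fun h => absurd h hf
        rw [heq]
        exact isClosed_univ
    have hGcomp : IsCompact G := hPc.of_isClosed_subset hGclosed hGext.1
    have hGconv : Convex ℝ G := by
      rintro z₁ h₁ z₂ h₂ α β hα hβ hαβ
      refine ⟨hPconv h₁.1 h₂.1 hα hβ hαβ, fun f hf => ?_⟩
      rw [ChainAux.ev_comb, h₁.2 f hf, h₂.2 f hf, ← add_mul, hαβ, one_mul]
    have hextG : Set.extremePoints ℝ G ⊆ Set.extremePoints ℝ P :=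
      hGext.extremePoints_subset_extremePoints
    have hfin : (Set.extremePoints ℝ G).Finite :=
      Set.Finite.subset (Set.Finite.image _ V.finite_toSet) (hextG.trans hPext)
    have hGKM : G = convexHull ℝ (Set.extremePoints ℝ G) := by
      have h1 := closure_convexHull_extremePoints hGcomp hGconv
      have h2 : closure (convexHull ℝ (Set.extremePoints ℝ G))
          = convexHull ℝ (Set.extremePoints ℝ G) :=
        IsClosed.closure_eq (hfin.isCompact_convexHull ℝ).isClosed
      exact h1.symm.trans h2
    by_cases hsub : Set.extremePoints ℝ G ⊆ {(fun i => (p i : ℝ)), (fun i => (q i : ℝ))}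
    · -- `G` is the segment: an edge
      have hGseg : G = segment ℝ (fun i => (p i : ℝ)) (fun i => (q i : ℝ)) := by
        apply Set.Subset.antisymm
        · rw [hGKM]
          refine (convexHull_mono hsub).trans ?_
          rw [convexHull_pair]
        · exact hGconv.segment_subset hGp hGq
      have hedge : IsExtreme ℝ P (segment ℝ (fun i => (p i : ℝ)) (fun i => (q i : ℝ))) :=
        hGseg ▸ hGext
      obtain ⟨f₀, hf₀⟩ : ∃ f, ∑ i, p i * a f i ≠ ∑ i, q i * a f i := by
        by_contra h
        push_neg at h
        exact hpq (hinj p q hp.1 h)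
      have hnolat : ¬ ∃ r : Fin d → ℤ,
          (fun i => (r i : ℝ)) ∈ openSegment ℝ (fun i => (p i : ℝ)) (fun i => (q i : ℝ)) ∧
          r ≠ p ∧ r ≠ q := by
        rintro ⟨r, hr, -, -⟩
        obtain ⟨α, β, hα, hβ, hαβ, hsum⟩ := hr
        have hev : ((∑ i, r i * a f₀ i : ℤ) : ℝ)
            = α * ((∑ i, p i * a f₀ i : ℤ) : ℝ) + β * ((∑ i, q i * a f₀ i : ℤ) : ℝ) := by
          rw [ChainAux.cast_ev, ChainAux.cast_ev, ChainAux.cast_ev,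
            Finset.mul_sum, Finset.mul_sum, ← Finset.sum_add_distrib]
          refine Finset.sum_congr rfl fun i _ => ?_
          have hi := congrFun hsum i
          simp only [Pi.add_apply, Pi.smul_apply, smul_eq_mul] at hi
          rw [← hi]
          ring
        rcases htv p hp.1 f₀ with hvp | hvp <;> rcases htv q hq.1 f₀ with hvq | hvq
        · exact hf₀ (by rw [hvp, hvq])
        · rw [hvp, hvq] at hev
          push_cast at hev
          have hkey : α * (c f₀ : ℝ) + β * ((c f₀ : ℝ) + 1) = (c f₀ : ℝ) + β := by
            linear_combination (c f₀ : ℝ) * hαβ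
          have hlo : (c f₀ : ℝ) < ((∑ i, r i * a f₀ i : ℤ) : ℝ) := by
            rw [ChainAux.cast_ev, hev, hkey]; linarith
          have hhi : ((∑ i, r i * a f₀ i : ℤ) : ℝ) < (c f₀ : ℝ) + 1 := by
            rw [ChainAux.cast_ev, hev, hkey]; linarith
          have hlo' : c f₀ < ∑ i, r i * a f₀ i := by exact_mod_cast hlo
          have hhi' : ∑ i, r i * a f₀ i < c f₀ + 1 := by exact_mod_cast hhi
          omega
        · rw [hvp, hvq] at hev
          push_cast at hev
          have hkey : α * ((c f₀ : ℝ) + 1) + β * (c f₀ : ℝ) = (c f₀ : ℝ) + α := by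
            linear_combination (c f₀ : ℝ) * hαβ
          have hlo : (c f₀ : ℝ) < ((∑ i, r i * a f₀ i : ℤ) : ℝ) := by
            rw [ChainAux.cast_ev, hev, hkey]; linarith
          have hhi : ((∑ i, r i * a f₀ i : ℤ) : ℝ) < (c f₀ : ℝ) + 1 := by
            rw [ChainAux.cast_ev, hev, hkey]; linarith
          have hlo' : c f₀ < ∑ i, r i * a f₀ i := by exact_mod_cast hlo
          have hhi' : ∑ i, r i * a f₀ i < c f₀ + 1 := by exact_mod_cast hhi
          omega
        · exact hf₀ (by rw [hvp, hvq])
      exact Relation.ReflTransGen.single ⟨hq, hDq, hpq, hp, hq, hedge, hnolat⟩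
    · -- there is a third vertex `u` of `G`
      obtain ⟨u', hu'G, hu'ne⟩ := Set.not_subset.mp hsub
      obtain ⟨u, huV, hueq⟩ := hPext (hextG hu'G)
      subst hueq
      have huP : (fun i => (u i : ℝ)) ∈ P := (hextG hu'G).1
      have hvertu : (fun i => (u i : ℝ)) ∈ Set.extremePoints ℝ P := hextG hu'G
      have hagree : ∀ f, ∑ i, p i * a f i = ∑ i, q i * a f i →
          ∑ i, u i * a f i = ∑ i, p i * a f i := by
        intro f hf
        have := hu'G.1.2 f hf
        rw [← ChainAux.cast_ev] at this
        exact_mod_cast this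
      have hDu : D u := by
        refine hD u p q hDp hDq fun f => ?_
        by_cases hf : ∑ i, p i * a f i = ∑ i, q i * a f i
        · exact Or.inl (hagree f hf)
        · rcases htv u huP f with h1 | h1 <;> rcases htv p hp.1 f with h2 | h2 <;>
            rcases htv q hq.1 f with h3 | h3 <;> omega
      have hup : u ≠ p := by
        intro h
        subst h
        exact hu'ne (Or.inl rfl)
      have huq : u ≠ q := by
        intro h
        subst h
        exact hu'ne (Or.inr rfl)
      -- Hamming distances strictly decrease
      have hsub1 : (Finset.univ.filter (fun f => ∑ i, p i * a f i ≠ ∑ i, u i * a f i)) ⊆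
          (Finset.univ.filter (fun f => ∑ i, p i * a f i ≠ ∑ i, q i * a f i)) := by
        intro f hf
        simp only [Finset.mem_filter, Finset.mem_univ, true_and] at hf ⊢
        intro heq
        exact hf (hagree f heq).symm
      have hne1 : (Finset.univ.filter (fun f => ∑ i, p i * a f i ≠ ∑ i, u i * a f i)) ≠
          (Finset.univ.filter (fun f => ∑ i, p i * a f i ≠ ∑ i, q i * a f i)) := by
        intro hEq
        apply huq
        apply hinj u q huP
        intro f
        by_cases hf : ∑ i, p i * a f i = ∑ i, q i * a f i
        · rw [hagree f hf, hf]
        · have hfmem : f ∈ Finset.univ.filter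
              (fun f => ∑ i, p i * a f i ≠ ∑ i, q i * a f i) := by simp [hf]
          rw [← hEq] at hfmem
          simp only [Finset.mem_filter, Finset.mem_univ, true_and] at hfmem
          rcases htv u huP f with h1 | h1 <;> rcases htv p hp.1 f with h2 | h2 <;>
            rcases htv q hq.1 f with h3 | h3 <;> omega
      have hsub2 : (Finset.univ.filter (fun f => ∑ i, u i * a f i ≠ ∑ i, q i * a f i)) ⊆
          (Finset.univ.filter (fun f => ∑ i, p i * a f i ≠ ∑ i, q i * a f i)) := by
        intro f hf
        simp only [Finset.mem_filter, Finset.mem_univ, true_and] at hf ⊢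
        intro heq
        exact hf (by rw [hagree f heq, heq])
      have hne2 : (Finset.univ.filter (fun f => ∑ i, u i * a f i ≠ ∑ i, q i * a f i)) ≠
          (Finset.univ.filter (fun f => ∑ i, p i * a f i ≠ ∑ i, q i * a f i)) := by
        intro hEq
        apply hup
        apply hinj u p huP
        intro f
        by_cases hf : ∑ i, p i * a f i = ∑ i, q i * a f i
        · rw [hagree f hf]
        · have hfmem : f ∈ Finset.univ.filter
              (fun f => ∑ i, p i * a f i ≠ ∑ i, q i * a f i) := by simp [hf]
          rw [← hEq] at hfmem
          simp only [Finset.mem_filter, Finset.mem_univ, true_and] at hfmem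
          rcases htv u huP f with h1 | h1 <;> rcases htv p hp.1 f with h2 | h2 <;>
            rcases htv q hq.1 f with h3 | h3 <;> omega
      have hc1 := Finset.card_lt_card (HasSubset.Subset.ssubset_of_ne hsub1 hne1)
      have hc2 := Finset.card_lt_card (HasSubset.Subset.ssubset_of_ne hsub2 hne2)
      exact (ih p u hp hDp hvertu hDu (by omega)).trans (ih u q hvertu hDu hq hDq (by omega))

end Main

/-- Convert reflexive-transitive closure of the neighbouring-step relation into
an explicit indexed chain. -/
lemma chain_of_rtg {d : ℕ} (P : Set (Fin d → ℝ)) (vert D : (Fin d → ℤ) → Prop)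
    (x y : Fin d → ℤ)
    (h : Relation.ReflTransGen (fun p q => vert q ∧ D q ∧ Neighbouring P p q) x y) :
    vert x → D x →
    ∃ (j : ℕ) (w : Fin (j + 1) → Fin d → ℤ),
      w 0 = x ∧ w (Fin.last j) = y ∧ (∀ i, vert (w i) ∧ D (w i)) ∧
      ∀ i : Fin j, Neighbouring P (w i.castSucc) (w i.succ) := by
  induction h using Relation.ReflTransGen.head_induction_on with
  | refl =>
    intro hy hDy
    exact ⟨0, fun _ => y, rfl, rfl, fun _ => ⟨hy, hDy⟩, fun i => i.elim0⟩
  | @head p b hstep htail ih =>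
    intro hxv hxD
    obtain ⟨hvb, hDb, hnb⟩ := hstep
    obtain ⟨j, w, hw0, hwl, hall, hnbr⟩ := ih hvb hDb
    refine ⟨j + 1, fun i => Fin.cases p w i, by simp, ?_, ?_, ?_⟩
    · show Fin.cases p w (Fin.last (j + 1)) = y
      rw [← Fin.succ_last, Fin.cases_succ]
      exact hwl
    · intro i
      induction i using Fin.cases with
      | zero => simp only [Fin.cases_zero]; exact ⟨hxv, hxD⟩
      | succ i => simp only [Fin.cases_succ]; exact hall i
    · intro i
      induction i using Fin.cases with
      | zero =>
        simp only [Fin.castSucc_zero, Fin.cases_zero, Fin.cases_succ, hw0]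
        exact hnb
      | succ i =>
        simp only [← Fin.succ_castSucc, Fin.cases_succ]
        exact hnbr i

end ChainAux

theorem chain_of_neighbouring_divisors
    (d : ℕ) (F : Type) [Fintype F]
    (a : F → Fin d → ℤ) (c : F → ℤ)
    (P : Set (Fin d → ℝ)) (V : Finset (Fin d → ℤ))
    (hlat : P = convexHull ℝ ((fun m : Fin d → ℤ => fun i => (m i : ℝ)) ''
      (V : Set (Fin d → ℤ))))
    (hfacet : P = {x : Fin d → ℝ | ∀ f : F, (c f : ℝ) ≤ ∑ i, x i * (a f i : ℝ)})
    (hprim : ∀ f : F, Finset.univ.gcd (a f) = 1)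
    -- compressed:
    (hwidth : ∀ f : F, ∀ x ∈ P, ∑ i, x i * (a f i : ℝ) ≤ c f + 1)
    (hwidth' : ∀ f : F, ∃ x ∈ P, ∑ i, x i * (a f i : ℝ) = c f + 1)
    (k : ℕ) (hk : 1 ≤ k) (s : Fin d → ℤ)
    (hs : (fun i => (s i : ℝ)) ∈ (k : ℝ) • P)
    (v₁ v₂ : Fin d → ℤ)
    (hv₁ : (fun i => (v₁ i : ℝ)) ∈ Set.extremePoints ℝ P)
    (hv₂ : (fun i => (v₂ i : ℝ)) ∈ Set.extremePoints ℝ P)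
    -- `v₁` and `v₂` divide `s` in `S(∇)`:
    (hdiv₁ : (fun i => ((s i - v₁ i : ℤ) : ℝ)) ∈ ((k : ℝ) - 1) • P)
    (hdiv₂ : (fun i => ((s i - v₂ i : ℤ) : ℝ)) ∈ ((k : ℝ) - 1) • P) :
    ∃ (j : ℕ) (w : Fin (j + 1) → Fin d → ℤ),
      w 0 = v₁ ∧ w (Fin.last j) = v₂ ∧
      (∀ i, (fun x => (w i x : ℝ)) ∈ Set.extremePoints ℝ P ∧
        (fun x => ((s x - w i x : ℤ) : ℝ)) ∈ ((k : ℝ) - 1) • P) ∧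
      ∀ i : Fin j, Neighbouring P (w i.castSucc) (w i.succ) := by
  classical
  by_cases hvv : v₁ = v₂
  · subst hvv
    exact ⟨0, fun _ => v₁, rfl, rfl, fun _ => ⟨hv₁, hdiv₁⟩, fun i => i.elim0⟩
  have hmem : ∀ x : Fin d → ℝ, x ∈ P ↔ ∀ f, (c f : ℝ) ≤ ∑ i, x i * (a f i : ℝ) := by
    intro x
    rw [hfacet]
    exact Iff.rfl
  rcases eq_or_lt_of_le hk with hk1 | hk2
  · exfalso
    apply hvv
    have hzero : ((k : ℝ) - 1) = 0 := by rw [← hk1]; norm_num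
    have hPne : P.Nonempty := ⟨_, hv₁.1⟩
    rw [hzero, Set.zero_smul_set hPne] at hdiv₁ hdiv₂
    have h₁ := Set.mem_zero.mp hdiv₁
    have h₂ := Set.mem_zero.mp hdiv₂
    funext i
    have e₁ : ((s i - v₁ i : ℤ) : ℝ) = 0 := by
      have := congrFun h₁ i; simpa using this
    have e₂ : ((s i - v₂ i : ℤ) : ℝ) = 0 := by
      have := congrFun h₂ i; simpa using this
    have e₁' : s i - v₁ i = 0 := by exact_mod_cast e₁
    have e₂' : s i - v₂ i = 0 := by exact_mod_cast e₂
    omega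
  · set K : ℤ := (k : ℤ) - 1 with hK
    have hKpos : (0 : ℝ) < (k : ℝ) - 1 := by
      have h2 : (2 : ℕ) ≤ k := hk2
      have : (2 : ℝ) ≤ (k : ℝ) := by exact_mod_cast h2
      linarith
    have hKr : ((K : ℤ) : ℝ) = (k : ℝ) - 1 := by rw [hK]; push_cast; ring
    set D : (Fin d → ℤ) → Prop := fun u => ∀ f, K * c f ≤ ∑ i, (s i - u i) * a f i ∧
      ∑ i, (s i - u i) * a f i ≤ K * (c f + 1) with hDdef
    have hEcast : ∀ (u : Fin d → ℤ) (f : F),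
        ∑ i, ((((k : ℝ) - 1)⁻¹ • fun x => ((s x - u x : ℤ) : ℝ)) i) * (a f i : ℝ)
          = ((k : ℝ) - 1)⁻¹ * ((∑ i, (s i - u i) * a f i : ℤ) : ℝ) := by
      intro u f
      rw [ChainAux.cast_ev, Finset.mul_sum]
      refine Finset.sum_congr rfl fun i _ => ?_
      simp only [Pi.smul_apply, smul_eq_mul]
      push_cast
      ring
    have hiff : ∀ u : Fin d → ℤ,
        ((fun x => ((s x - u x : ℤ) : ℝ)) ∈ ((k : ℝ) - 1) • P) ↔ D u := by
      intro u
      constructor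
      · intro hmem'
        have hscal := (Set.mem_smul_set_iff_inv_smul_mem₀ hKpos.ne' P _).mp hmem'
        intro f
        have hlow := (hmem _).1 hscal f
        have hup := hwidth f _ hscal
        rw [hEcast u f] at hlow hup
        have hlow2 := mul_le_mul_of_nonneg_left hlow hKpos.le
        rw [← mul_assoc, mul_inv_cancel₀ hKpos.ne', one_mul] at hlow2
        have hup2 := mul_le_mul_of_nonneg_left hup hKpos.le
        rw [← mul_assoc, mul_inv_cancel₀ hKpos.ne', one_mul] at hup2
        have hlowZ : K * c f ≤ ∑ i, (s i - u i) * a f i := by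
          have hcast : ((K * c f : ℤ) : ℝ) ≤ ((∑ i, (s i - u i) * a f i : ℤ) : ℝ) := by
            push_cast [hKr]
            push_cast at hlow2
            linarith
          exact_mod_cast hcast
        have hupZ : ∑ i, (s i - u i) * a f i ≤ K * (c f + 1) := by
          have hcast : ((∑ i, (s i - u i) * a f i : ℤ) : ℝ) ≤ ((K * (c f + 1) : ℤ) : ℝ) := by
            push_cast [hKr]
            push_cast at hup2
            linarith
          exact_mod_cast hcast
        exact ⟨hlowZ, hupZ⟩
      · intro hDu
        rw [Set.mem_smul_set_iff_inv_smul_mem₀ hKpos.ne', hmem]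
        intro f
        rw [hEcast u f]
        have h1 : ((k : ℝ) - 1) * (c f : ℝ) ≤ ((∑ i, (s i - u i) * a f i : ℤ) : ℝ) := by
          rw [← hKr]
          exact_mod_cast (hDu f).1
        have h2 := mul_le_mul_of_nonneg_left h1 (inv_nonneg.2 hKpos.le)
        rw [← mul_assoc, inv_mul_cancel₀ hKpos.ne', one_mul] at h2
        exact h2
    have hexpand : ∀ (z : Fin d → ℤ) (f : F),
        ∑ i, (s i - z i) * a f i = ∑ i, s i * a f i - ∑ i, z i * a f i := by
      intro z f
      rw [← Finset.sum_sub_distrib]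
      refine Finset.sum_congr rfl fun i _ => ?_
      ring
    have hD : ∀ u x y : Fin d → ℤ, D x → D y →
        (∀ f, ∑ i, u i * a f i = ∑ i, x i * a f i ∨
          ∑ i, u i * a f i = ∑ i, y i * a f i) → D u := by
      intro u x y hDx hDy hch f
      rcases hch f with h | h
      · have : ∑ i, (s i - u i) * a f i = ∑ i, (s i - x i) * a f i := by
          rw [hexpand, hexpand, h]
        rw [this]
        exact hDx f
      · have : ∑ i, (s i - u i) * a f i = ∑ i, (s i - y i) * a f i := by
          rw [hexpand, hexpand, h]
        rw [this]
        exact hDy f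
    have hrtg := ChainAux.chain_rtg a c P V hlat hmem hwidth D hD v₁ v₂
      hv₁ ((hiff v₁).1 hdiv₁) hv₂ ((hiff v₂).1 hdiv₂)
    obtain ⟨j, w, hw0, hwl, hall, hnbr⟩ :=
      ChainAux.chain_of_rtg P (fun u => (fun i => (u i : ℝ)) ∈ Set.extremePoints ℝ P) D
        v₁ v₂ hrtg hv₁ ((hiff v₁).1 hdiv₁)
    exact ⟨j, w, hw0, hwl, fun i => ⟨(hall i).1, (hiff _).2 (hall i).2⟩, hnbr⟩
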